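/- Let w : ℕ → (0,∞) satisfy w(k) = k + v(k) where v(k) = o(k) as k → ∞ and the series ∑_{k≥1} v(k)/k² converges. Then the series ρ̂(λ) := ∑_{k=1}^∞ ∏_{j=0}^{k−1} w(j)/(λ + w(j)) converges for every λ > 1 and diverges for every λ with 0 < λ ≤ 1. -/

import Mathlib

open Filter Asymptotics Topology

lemma abs_log_one_add_le {x : ℝ} (hx : -(1/2 : ℝ) ≤ x) :
    |Real.log (1 + x)| ≤ 2 * |x| := by
  have h0 : (0:ℝ) < 1 + x := by linarith
  have hup : Real.log (1 + x) ≤ x := by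
    have := Real.log_le_sub_one_of_pos h0; linarith
  have hlow : x / (1 + x) ≤ Real.log (1 + x) := by
    have h0' : (0:ℝ) < (1+x)⁻¹ := by positivity
    have h := Real.log_le_sub_one_of_pos h0'
    rw [Real.log_inv] at h
    have heq : (1+x)⁻¹ - 1 = -x / (1+x) := by field_simp; ring
    rw [heq] at h
    have : -Real.log (1+x) ≤ -(x / (1+x)) := by
      rw [neg_div] at h; linarith
    linarith
  rw [abs_le]
  constructor
  · rcases le_or_gt 0 x with h | h
    · have h1 : 0 ≤ Real.log (1+x) := Real.log_nonneg (by linarith)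
      have h2 : (0:ℝ) ≤ 2*|x| := by positivity
      linarith
    · have habs : |x| = -x := abs_of_neg h
      have h2 : 2*x ≤ x/(1+x) := by
        rw [le_div_iff₀ h0]
        nlinarith
      rw [habs]
      linarith
  · have := le_abs_self x
    have := abs_nonneg x
    linarith

lemma exists_bounds_of_tendsto {f : ℕ → ℝ} {L : ℝ} (hL : 0 < L)
    (hpos : ∀ n, 1 ≤ n → 0 < f n) (hf : Tendsto f atTop (𝓝 L)) :
    ∃ c C : ℝ, 0 < c ∧ ∀ n, 1 ≤ n → c ≤ f n ∧ f n ≤ C := by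
  have h1 : ∀ᶠ n in atTop, L / 2 < f n :=
    hf.eventually (eventually_gt_nhds (by linarith))
  have h2 : ∀ᶠ n in atTop, f n < L + 1 :=
    hf.eventually (eventually_lt_nhds (by linarith))
  obtain ⟨N, hN⟩ := eventually_atTop.1 (h1.and h2)
  set S : Finset ℕ := insert 1 (Finset.Icc 1 N) with hS
  have hSne : S.Nonempty := ⟨1, Finset.mem_insert_self _ _⟩
  refine ⟨min (L/2) (S.inf' hSne f), max (L+1) (S.sup' hSne f), ?_, ?_⟩
  · apply lt_min (by linarith)
    rw [Finset.lt_inf'_iff]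
    intro b hb
    apply hpos
    rcases Finset.mem_insert.1 hb with h | h
    · omega
    · exact (Finset.mem_Icc.1 h).1
  · intro n hn
    rcases le_or_gt N n with h | h
    · have hh := hN n h
      exact ⟨le_trans (min_le_left _ _) hh.1.le, le_trans hh.2.le (le_max_left _ _)⟩
    · have hmem : n ∈ S := Finset.mem_insert_of_mem (Finset.mem_Icc.2 ⟨hn, h.le⟩)
      exact ⟨le_trans (min_le_right _ _) (Finset.inf'_le f hmem),
        le_trans (Finset.le_sup' f hmem) (le_max_right _ _)⟩

lemma key_bounds (w v : ℕ → ℝ) (hw : ∀ k, 0 < w k)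
    (hwv : ∀ k, w k = (k : ℝ) + v k)
    (hv : v =o[atTop] fun k : ℕ => (k : ℝ))
    (hvsum : Summable (fun k : ℕ => v k / (k : ℝ) ^ 2))
    (lam : ℝ) (hlam : 0 < lam) :
    ∃ c C : ℝ, 0 < c ∧ ∀ n : ℕ, 1 ≤ n →
      c * (n : ℝ) ^ (-lam) ≤ ∏ j ∈ Finset.range (n + 1), w j / (lam + w j) ∧
      ∏ j ∈ Finset.range (n + 1), w j / (lam + w j) ≤ C * (n : ℝ) ^ (-lam) := by
  have hlw : ∀ j, 0 < lam + w j := fun j => by have := hw j; linarith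
  set t : ℕ → ℝ := fun j => w j / (lam + w j) with ht
  have htpos : ∀ j, 0 < t j := fun j => div_pos (hw j) (hlw j)
  set q : ℕ → ℝ := fun i => ((i : ℝ) + 1) / (lam + ((i : ℝ) + 1)) with hq
  set r : ℕ → ℝ := fun i =>
    w (i+1) * (lam + ((i : ℝ) + 1)) / (((i : ℝ) + 1) * (lam + w (i+1))) with hr
  set s : ℕ → ℝ := fun i =>
    lam * v (i+1) / (((i : ℝ) + 1) * (lam + w (i+1))) with hs
  have hi1 : ∀ i : ℕ, (0:ℝ) < (i:ℝ) + 1 := fun i => by positivity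
  have hqlam : ∀ i : ℕ, (0:ℝ) < lam + ((i:ℝ)+1) := fun i => by have := hi1 i; linarith
  have hrpos : ∀ i, 0 < r i := fun i =>
    div_pos (mul_pos (hw _) (hqlam i)) (mul_pos (hi1 i) (hlw _))
  have hfac : ∀ i : ℕ, t (i+1) = q i * r i := by
    intro i
    have h1 := (hi1 i).ne'
    have h2 := (hqlam i).ne'
    have h3 := (hlw (i+1)).ne'
    simp only [ht, hq, hr]
    field_simp
  have hr1s : ∀ i : ℕ, r i = 1 + s i := by
    intro i
    have h1 := (hi1 i).ne'
    have h3 := (hlw (i+1)).ne'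
    have hw1 : w (i+1) = (i:ℝ) + 1 + v (i+1) := by
      rw [hwv]; push_cast; ring
    simp only [hr, hs]
    rw [hw1] at h3 ⊢
    field_simp
    ring
  have hdecomp : ∀ n : ℕ, ∏ j ∈ Finset.range (n+1), t j
      = ((∏ i ∈ Finset.range n, q i) * (∏ i ∈ Finset.range n, r i)) * t 0 := by
    intro n
    rw [Finset.prod_range_succ']
    congr 1
    rw [← Finset.prod_mul_distrib]
    exact Finset.prod_congr rfl fun i _ => hfac i
  -- the Gamma-sequence identity
  have hA : ∀ n : ℕ, 1 ≤ n → ∏ i ∈ Finset.range n, q i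
      = lam * Real.GammaSeq lam n * (n:ℝ) ^ (-lam) := by
    intro n hn
    have hnpos : (0:ℝ) < n := by exact_mod_cast hn
    have hD : (0:ℝ) < ∏ i ∈ Finset.range n, (lam + ((i:ℝ)+1)) :=
      Finset.prod_pos fun i _ => hqlam i
    have hnum : ∏ i ∈ Finset.range n, ((i:ℝ)+1) = (Nat.factorial n : ℝ) := by
      rw [← Finset.prod_range_add_one_eq_factorial n]
      push_cast
      rfl
    have hprod : ∏ j ∈ Finset.range (n+1), (lam + (j:ℝ))
        = (∏ i ∈ Finset.range n, (lam + ((i:ℝ)+1))) * lam := by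
      rw [Finset.prod_range_succ']
      congr 1
      · exact Finset.prod_congr rfl fun i _ => by push_cast; ring
      · norm_num
    have hA1 : ∏ i ∈ Finset.range n, q i
        = (Nat.factorial n : ℝ) / ∏ i ∈ Finset.range n, (lam + ((i:ℝ)+1)) := by
      rw [← hnum, ← Finset.prod_div_distrib]
    rw [hA1, Real.GammaSeq, hprod, Real.rpow_neg hnpos.le]
    have hnl : ((n:ℝ) ^ lam) ≠ 0 := (Real.rpow_pos_of_pos hnpos _).ne'
    field_simp
  have hGpos : ∀ n : ℕ, 1 ≤ n → 0 < Real.GammaSeq lam n := by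
    intro n hn
    have hnpos : (0:ℝ) < n := by exact_mod_cast hn
    rw [Real.GammaSeq]
    have h1 : (0:ℝ) < (n:ℝ) ^ lam := Real.rpow_pos_of_pos hnpos _
    have h2 : (0:ℝ) < ∏ j ∈ Finset.range (n+1), (lam + (j:ℝ)) :=
      Finset.prod_pos fun j _ => add_pos_of_pos_of_nonneg hlam (Nat.cast_nonneg j)
    exact div_pos (mul_pos h1 (Nat.cast_pos.mpr n.factorial_pos)) h2
  obtain ⟨cG, CG, hcG, hG⟩ := exists_bounds_of_tendsto (Real.Gamma_pos_of_pos hlam)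
    hGpos (Real.GammaSeq_tendsto_Gamma lam)
  -- summability of `s`
  have hvabs : Summable (fun i : ℕ => |v (i+1) / (((i+1:ℕ)) : ℝ) ^ 2|) :=
    ((summable_nat_add_iff 1).2 hvsum).abs
  have hbig : ∀ᶠ i : ℕ in atTop,
      ‖s i‖ ≤ (2 * lam) * |v (i+1) / (((i+1:ℕ)):ℝ) ^ 2| := by
    have hvo := hv.def (by norm_num : (0:ℝ) < 1/2)
    rw [eventually_atTop] at hvo ⊢
    obtain ⟨N, hN⟩ := hvo
    refine ⟨N, fun i hi => ?_⟩
    have hvi : |v (i+1)| ≤ (1/2) * ((i:ℝ)+1) := by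
      have h := hN (i+1) (le_trans hi (Nat.le_succ i))
      rw [Real.norm_eq_abs, Real.norm_eq_abs] at h
      have : |((i+1:ℕ):ℝ)| = (i:ℝ)+1 := by
        rw [abs_of_nonneg (Nat.cast_nonneg _)]; push_cast; ring
      rw [this] at h
      exact h
    have hw1 : ((i:ℝ)+1)/2 ≤ lam + w (i+1) := by
      have heq := hwv (i+1)
      have h2 : -((1/2) * ((i:ℝ)+1)) ≤ v (i+1) := (abs_le.1 hvi).1
      push_cast at heq
      linarith
    have hden : (0:ℝ) < ((i:ℝ)+1) * (lam + w (i+1)) := mul_pos (hi1 i) (hlw _)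
    rw [Real.norm_eq_abs]
    calc |s i| = lam * |v (i+1)| / (((i:ℝ)+1) * (lam + w (i+1))) := by
          rw [hs, abs_div, abs_mul, abs_of_pos hlam, abs_of_pos hden]
      _ ≤ lam * |v (i+1)| / (((i:ℝ)+1) * (((i:ℝ)+1)/2)) := by
          apply div_le_div_of_nonneg_left (by positivity) (by positivity)
          exact mul_le_mul_of_nonneg_left hw1 (hi1 i).le
      _ = (2*lam) * (|v (i+1)| / ((i:ℝ)+1)^2) := by
          field_simp
      _ = (2*lam) * |v (i+1) / (((i+1:ℕ)):ℝ)^2| := by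
          rw [abs_div, abs_of_nonneg (by positivity : (0:ℝ) ≤ (((i+1:ℕ)):ℝ)^2)]
          push_cast
          ring
  have hssum : Summable s :=
    Summable.of_norm_bounded_eventually_nat (hvabs.mul_left (2*lam)) hbig
  have hstend : Tendsto s atTop (𝓝 0) := hssum.tendsto_atTop_zero
  have hlogsum : Summable (fun i => Real.log (r i)) := by
    apply Summable.of_norm_bounded_eventually_nat (g := fun i => 2 * |s i|)
      (hssum.abs.mul_left 2)
    have hev : ∀ᶠ i in atTop, -(1/2 : ℝ) ≤ s i :=
      (hstend.eventually (eventually_gt_nhds (by norm_num : -(1/2:ℝ) < 0))).mono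
        fun i hi => hi.le
    filter_upwards [hev] with i hi
    rw [Real.norm_eq_abs, hr1s i]
    exact abs_log_one_add_le hi
  have hBexp : ∀ n, ∏ i ∈ Finset.range n, r i
      = Real.exp (∑ i ∈ Finset.range n, Real.log (r i)) := by
    intro n
    rw [Real.exp_sum]
    exact Finset.prod_congr rfl fun i _ => (Real.exp_log (hrpos i)).symm
  have hBtend : Tendsto (fun n => ∏ i ∈ Finset.range n, r i) atTop
      (𝓝 (Real.exp (∑' i, Real.log (r i)))) := by
    simp only [hBexp]
    exact (Real.continuous_exp.tendsto _).comp hlogsum.hasSum.tendsto_sum_nat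
  have hBpos : ∀ n, 1 ≤ n → 0 < ∏ i ∈ Finset.range n, r i :=
    fun n _ => Finset.prod_pos fun i _ => hrpos i
  obtain ⟨cB, CB, hcB, hB⟩ := exists_bounds_of_tendsto (Real.exp_pos _) hBpos hBtend
  refine ⟨t 0 * lam * cG * cB, t 0 * lam * CG * CB,
    mul_pos (mul_pos (mul_pos (htpos 0) hlam) hcG) hcB, fun n hn => ?_⟩
  have hnpos : (0:ℝ) < (n:ℝ) := by exact_mod_cast hn
  have hrp : (0:ℝ) < (n:ℝ) ^ (-lam) := Real.rpow_pos_of_pos hnpos _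
  have hGn := hG n hn
  have hBn := hB n hn
  have hGn0 := hGpos n hn
  have hBn0 := hBpos n hn
  have hKpos : (0:ℝ) ≤ lam * (n:ℝ)^(-lam) * t 0 :=
    (mul_pos (mul_pos hlam hrp) (htpos 0)).le
  rw [hdecomp n, hA n hn]
  constructor
  · have h1 : cG * cB ≤ Real.GammaSeq lam n * (∏ i ∈ Finset.range n, r i) :=
      mul_le_mul hGn.1 hBn.1 hcB.le hGn0.le
    calc (t 0 * lam * cG * cB) * (n:ℝ)^(-lam)
        = (lam * (n:ℝ)^(-lam) * t 0) * (cG * cB) := by ring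
      _ ≤ (lam * (n:ℝ)^(-lam) * t 0)
            * (Real.GammaSeq lam n * ∏ i ∈ Finset.range n, r i) :=
          mul_le_mul_of_nonneg_left h1 hKpos
      _ = lam * Real.GammaSeq lam n * (n:ℝ)^(-lam)
            * (∏ i ∈ Finset.range n, r i) * t 0 := by ring
  · have h1 : Real.GammaSeq lam n * (∏ i ∈ Finset.range n, r i) ≤ CG * CB :=
      mul_le_mul hGn.2 hBn.2 hBn0.le (hGn0.trans_le hGn.2).le
    calc lam * Real.GammaSeq lam n * (n:ℝ)^(-lam)
          * (∏ i ∈ Finset.range n, r i) * t 0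
        = (lam * (n:ℝ)^(-lam) * t 0)
            * (Real.GammaSeq lam n * ∏ i ∈ Finset.range n, r i) := by ring
      _ ≤ (lam * (n:ℝ)^(-lam) * t 0) * (CG * CB) :=
          mul_le_mul_of_nonneg_left h1 hKpos
      _ = (t 0 * lam * CG * CB) * (n:ℝ)^(-lam) := by ring

/-- If `w k = k + v k` with `v k = o(k)` and `∑ v k / k²` convergent, then the
series `ρ̂(λ) = ∑_{k=1}^∞ ∏_{j=0}^{k-1} w j / (λ + w j)` converges for every `λ > 1` and
diverges for every `0 < λ ≤ 1`. -/
theorem statement3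
    (w v : ℕ → ℝ) (hw : ∀ k, 0 < w k)
    (hwv : ∀ k, w k = (k : ℝ) + v k)
    (hv : v =o[atTop] fun k : ℕ => (k : ℝ))
    (hvsum : Summable (fun k : ℕ => v k / (k : ℝ) ^ 2)) :
    (∀ lam : ℝ, 1 < lam →
      Summable (fun k : ℕ => ∏ j ∈ Finset.range (k + 1), w j / (lam + w j))) ∧
    (∀ lam : ℝ, 0 < lam → lam ≤ 1 →
      ¬ Summable (fun k : ℕ => ∏ j ∈ Finset.range (k + 1), w j / (lam + w j))) := by
  constructor
  · intro lam hlam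
    obtain ⟨c, C, hc, hkey⟩ := key_bounds w v hw hwv hv hvsum lam (by linarith)
    rw [← summable_nat_add_iff 1]
    have hsum : Summable (fun n : ℕ => C * (((n+1:ℕ)):ℝ) ^ (-lam)) := by
      apply Summable.mul_left
      exact (summable_nat_add_iff 1).2 (Real.summable_nat_rpow.2 (by linarith))
    apply Summable.of_nonneg_of_le _ _ hsum
    · intro n
      exact Finset.prod_nonneg fun j _ =>
        div_nonneg (hw j).le (by have := hw j; linarith)
    · intro n
      exact (hkey (n+1) (Nat.le_add_left 1 n)).2
  · intro lam hl0 hl1 hsum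
    obtain ⟨c, C, hc, hkey⟩ := key_bounds w v hw hwv hv hvsum lam hl0
    have h1 : Summable (fun n : ℕ => ∏ j ∈ Finset.range ((n+1) + 1), w j / (lam + w j)) :=
      (summable_nat_add_iff (f := fun k : ℕ => ∏ j ∈ Finset.range (k + 1), w j / (lam + w j)) 1).2 hsum
    have h2 : Summable (fun n : ℕ => c * (((n+1:ℕ)):ℝ)⁻¹) := by
      apply Summable.of_nonneg_of_le _ _ h1
      · intro n; positivity
      · intro n
        have hk := (hkey (n+1) (Nat.le_add_left 1 n)).1
        refine le_trans ?_ hk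
        apply mul_le_mul_of_nonneg_left _ hc.le
        have hb : (1:ℝ) ≤ ((n+1:ℕ):ℝ) := by
          push_cast; linarith [Nat.cast_nonneg (α := ℝ) n]
        have h := Real.rpow_le_rpow_of_exponent_le hb (by linarith : -(1:ℝ) ≤ -lam)
        rwa [Real.rpow_neg_one] at h
    have h3 : Summable (fun n : ℕ => (((n+1:ℕ)):ℝ)⁻¹) := by
      have h := h2.mul_left c⁻¹
      simpa [← mul_assoc, inv_mul_cancel₀ hc.ne'] using h
    have h4 : Summable (fun n : ℕ => ((n:ℕ):ℝ)⁻¹) := (summable_nat_add_iff 1).1 h3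
    exact Real.not_summable_natCast_inv h4
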